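/- Let 0 < x ≤ 1/2, n ≥ 1, S = ∑_{i≥1} Zᵢ, S_n = ∑_{i=1}^n Zᵢ with Zᵢ independent geometric, P(Zᵢ ≥ k) = x^{ik}. Then d_TV(S, S_n) = ∏_{i=1}^n (1−xⁱ) · (1 − ∏_{i=n+1}^∞ (1−xⁱ)) = P(S_n = 0) − P(S = 0). -/

import Mathlib

open MeasureTheory ProbabilityTheory Filter Topology



section DTVAux

variable {Ω : Type*} [MeasurableSpace Ω] (P : Measure Ω) (Z : ℕ → Ω → ℕ)

/-- pmf of the partial sum -/
noncomputable def dtvF (N k : ℕ) : ℝ :=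
  (P {ω | ∑ i ∈ Finset.Icc 1 N, Z i ω = k}).toReal

variable [IsProbabilityMeasure P] {x : ℝ}

lemma dtv_measB (B : Set ℕ) : MeasurableSet B := B.to_countable.measurableSet

lemma dtv_measS (hmeas : ∀ i, Measurable (Z i)) (N : ℕ) :
    Measurable (fun ω => ∑ i ∈ Finset.Icc 1 N, Z i ω) :=
  Finset.measurable_sum _ (fun i _ => hmeas i)

lemma dtv_pmfZ (hx0 : 0 < x) (hx1 : x < 1)
    (hgeom : ∀ i, 1 ≤ i → ∀ k : ℕ, P {ω | k ≤ Z i ω} = ENNReal.ofReal (x ^ (i * k)))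
    (hmeas : ∀ i, Measurable (Z i)) (i : ℕ) (hi : 1 ≤ i) (k : ℕ) :
    P {ω | Z i ω = k} = ENNReal.ofReal (x ^ (i * k) * (1 - x ^ i)) := by
  have hsub : {ω | k + 1 ≤ Z i ω} ⊆ {ω | k ≤ Z i ω} := fun ω h => le_trans (Nat.le_succ k) h
  have hset : {ω | Z i ω = k} = {ω | k ≤ Z i ω} \ {ω | k + 1 ≤ Z i ω} := by
    ext ω; simp only [Set.mem_setOf_eq, Set.mem_diff, not_le]; omega
  have hms : MeasurableSet {ω | k + 1 ≤ Z i ω} := by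
    have : {ω | k + 1 ≤ Z i ω} = Z i ⁻¹' {m | k + 1 ≤ m} := rfl
    rw [this]; exact hmeas i (dtv_measB _)
  rw [hset, measure_diff hsub hms.nullMeasurableSet (measure_ne_top P _), hgeom i hi,
    hgeom i hi, ← ENNReal.ofReal_sub _ (by positivity)]
  congr 1
  have : i * (k + 1) = i * k + i := by ring
  rw [this, pow_add]; ring

end DTVAux

section DTVAux
variable {Ω : Type*} [MeasurableSpace Ω] (P : Measure Ω) (Z : ℕ → Ω → ℕ)


lemma dtv_conv [IsProbabilityMeasure P] (hmeas : ∀ i, Measurable (Z i))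
    (hindep : iIndepFun Z P) (N k : ℕ) :
    P {ω | ∑ i ∈ Finset.Icc 1 (N + 1), Z i ω = k}
      = ∑ j ∈ Finset.range (k + 1),
          P {ω | ∑ i ∈ Finset.Icc 1 N, Z i ω = k - j} * P {ω | Z (N + 1) ω = j} := by
  classical
  have hind : IndepFun (∑ i ∈ Finset.Icc 1 N, Z i) (Z (N + 1)) P :=
    hindep.indepFun_finsetSum_of_notMem hmeas (by simp)
  have hset : {ω | ∑ i ∈ Finset.Icc 1 (N + 1), Z i ω = k}
      = ⋃ j ∈ (Finset.range (k + 1) : Finset ℕ),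
          ({ω | ∑ i ∈ Finset.Icc 1 N, Z i ω = k - j} ∩ {ω | Z (N + 1) ω = j}) := by
    ext ω
    simp only [Set.mem_setOf_eq, Set.mem_iUnion, Finset.mem_range, Set.mem_inter_iff,
      exists_prop]
    rw [Finset.sum_Icc_succ_top (by omega)]
    constructor
    · intro h; exact ⟨Z (N + 1) ω, by omega, by omega, rfl⟩
    · rintro ⟨j, hj, h1, h2⟩; omega
  have hmeasSN : Measurable (fun ω => ∑ i ∈ Finset.Icc 1 N, Z i ω) :=
    Finset.measurable_sum _ (fun i _ => hmeas i)
  rw [hset, measure_biUnion_finset ?_ ?_]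
  · refine Finset.sum_congr rfl (fun j hj => ?_)
    have h := hind.measure_inter_preimage_eq_mul {k - j} {j} (dtv_measB _) (dtv_measB _)
    have e1 : (∑ i ∈ Finset.Icc 1 N, Z i) ⁻¹' {k - j}
        = {ω | ∑ i ∈ Finset.Icc 1 N, Z i ω = k - j} := by
      ext ω; simp [Finset.sum_apply]
    have e2 : Z (N + 1) ⁻¹' {j} = {ω | Z (N + 1) ω = j} := by ext ω; simp
    rw [e1, e2] at h
    exact h
  · intro a _ b _ hab
    refine Set.disjoint_left.2 (fun ω hω hω' => hab ?_)
    have h1 : Z (N + 1) ω = a := hω.2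
    have h2 : Z (N + 1) ω = b := hω'.2
    omega
  · intro j _
    exact (hmeasSN (dtv_measB ({k - j} : Set ℕ))).inter
      ((hmeas (N + 1)) (dtv_measB ({j} : Set ℕ)))
end DTVAux

section DTVAux
variable {Ω : Type*} [MeasurableSpace Ω] (P : Measure Ω) (Z : ℕ → Ω → ℕ) {x : ℝ}
variable [IsProbabilityMeasure P]

variable (hx0 : 0 < x) (hx1 : x < 1)
    (hgeom : ∀ i, 1 ≤ i → ∀ k : ℕ, P {ω | k ≤ Z i ω} = ENNReal.ofReal (x ^ (i * k)))
    (hmeas : ∀ i, Measurable (Z i))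
    (hindep : iIndepFun Z P)

include hx0 hx1 hgeom hmeas hindep in
lemma dtv_convR (N k : ℕ) :
    dtvF P Z (N + 1) k = ∑ j ∈ Finset.range (k + 1),
      dtvF P Z N (k - j) * (x ^ ((N + 1) * j) * (1 - x ^ (N + 1))) := by
  have hnn : ∀ j : ℕ, 0 ≤ x ^ ((N + 1) * j) * (1 - x ^ (N + 1)) := by
    intro j
    have h1 : x ^ (N + 1) < 1 := pow_lt_one₀ hx0.le hx1 (by omega)
    exact mul_nonneg (pow_nonneg hx0.le _) (by linarith)
  rw [dtvF, dtv_conv P Z hmeas hindep, ENNReal.toReal_sum]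
  · refine Finset.sum_congr rfl (fun j _ => ?_)
    rw [ENNReal.toReal_mul, dtv_pmfZ P Z hx0 hx1 hgeom hmeas (N + 1) (by omega) j,
      ENNReal.toReal_ofReal (hnn j)]
    rfl
  · intro j _
    exact ENNReal.mul_ne_top (measure_ne_top P _) (measure_ne_top P _)

include hx0 hx1 hgeom hmeas hindep in
lemma dtv_rec0 (N : ℕ) : dtvF P Z (N + 1) 0 = (1 - x ^ (N + 1)) * dtvF P Z N 0 := by
  rw [dtv_convR P Z hx0 hx1 hgeom hmeas hindep N 0]
  simp [mul_comm]

include hx0 hx1 hgeom hmeas hindep in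
lemma dtv_rec (N k : ℕ) :
    dtvF P Z (N + 1) (k + 1)
      = (1 - x ^ (N + 1)) * dtvF P Z N (k + 1) + x ^ (N + 1) * dtvF P Z (N + 1) k := by
  rw [dtv_convR P Z hx0 hx1 hgeom hmeas hindep N (k + 1),
    dtv_convR P Z hx0 hx1 hgeom hmeas hindep N k, Finset.sum_range_succ']
  have e0 : dtvF P Z N (k + 1 - 0) * (x ^ ((N + 1) * 0) * (1 - x ^ (N + 1)))
      = (1 - x ^ (N + 1)) * dtvF P Z N (k + 1) := by
    simp only [Nat.sub_zero, mul_zero, pow_zero, one_mul]; ring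
  rw [e0]
  have hs : ∑ j ∈ Finset.range (k + 1),
        dtvF P Z N (k + 1 - (j + 1)) * (x ^ ((N + 1) * (j + 1)) * (1 - x ^ (N + 1)))
      = x ^ (N + 1) * ∑ j ∈ Finset.range (k + 1),
          dtvF P Z N (k - j) * (x ^ ((N + 1) * j) * (1 - x ^ (N + 1))) := by
    rw [Finset.mul_sum]
    refine Finset.sum_congr rfl (fun j hj => ?_)
    have e1 : k + 1 - (j + 1) = k - j := by omega
    have e2 : (N + 1) * (j + 1) = (N + 1) * j + (N + 1) := by ring
    rw [e1, e2, pow_add]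
    ring
  rw [hs]
  ring
end DTVAux

section DTVArith
variable {x : ℝ} {F : ℕ → ℕ → ℝ}

lemma dtv_csum (hx1 : x ≠ 1) (N : ℕ) :
    ∑ i ∈ Finset.Icc 1 N, x ^ i = x * (1 - x ^ N) / (1 - x) := by
  induction N with
  | zero => simp
  | succ N ih =>
    rw [Finset.sum_Icc_succ_top (by omega), ih]
    have h : (1 : ℝ) - x ≠ 0 := fun h => hx1 (by linarith)
    field_simp
    ring

lemma dtv_csum_le (hx0 : 0 < x) (hx2 : x ≤ 1 / 2) (N : ℕ) :
    ∑ i ∈ Finset.Icc 1 N, x ^ i ≤ 1 - x ^ (N + 1) := by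
  have hx1 : x < 1 := lt_of_le_of_lt hx2 (by norm_num)
  rw [dtv_csum (by linarith) N]
  rw [div_le_iff₀ (by linarith)]
  have hu0 : 0 ≤ x ^ N := pow_nonneg hx0.le N
  have hu1 : x ^ N ≤ 1 := pow_le_one₀ hx0.le hx1.le
  have hp : x ^ (N + 1) = x ^ N * x := by rw [pow_succ]
  rw [hp]
  nlinarith [mul_nonneg hu0 (sq_nonneg x)]

lemma dtv_csum_nonneg (hx0 : 0 < x) (N : ℕ) : 0 ≤ ∑ i ∈ Finset.Icc 1 N, x ^ i :=
  Finset.sum_nonneg fun i _ => pow_nonneg hx0.le i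

lemma dtv_csum_le_one (hx0 : 0 < x) (hx2 : x ≤ 1 / 2) (N : ℕ) :
    ∑ i ∈ Finset.Icc 1 N, x ^ i ≤ 1 := by
  have h := dtv_csum_le hx0 hx2 N
  have : 0 ≤ x ^ (N + 1) := pow_nonneg hx0.le _
  linarith

variable (hx0 : 0 < x) (hx2 : x ≤ 1 / 2)
  (h00 : F 0 0 = 1) (h0s : ∀ k, F 0 (k + 1) = 0) (hnn : ∀ N k, 0 ≤ F N k)
  (hr0 : ∀ N, F (N + 1) 0 = (1 - x ^ (N + 1)) * F N 0)
  (hr : ∀ N k, F (N + 1) (k + 1)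
      = (1 - x ^ (N + 1)) * F N (k + 1) + x ^ (N + 1) * F (N + 1) k)

section
include hx0 hx2 hnn hr0 hr

lemma dtv_geF (N k : ℕ) : (1 - x ^ (N + 1)) * F N k ≤ F (N + 1) k := by
  cases k with
  | zero => exact le_of_eq (hr0 N).symm
  | succ k =>
    rw [hr N k]
    exact le_add_of_nonneg_right (mul_nonneg (pow_nonneg hx0.le _) (hnn _ _))

include h0s in
lemma dtv_ratio (N k : ℕ) : F N (k + 1) ≤ (∑ i ∈ Finset.Icc 1 N, x ^ i) * F N k := by
  induction N generalizing k with
  | zero => simp [h0s k]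
  | succ N ih =>
    have hx1 : x < 1 := lt_of_le_of_lt hx2 (by norm_num)
    have hp0 : 0 ≤ x ^ (N + 1) := pow_nonneg hx0.le _
    have hp1 : x ^ (N + 1) ≤ 1 := pow_le_one₀ hx0.le hx1.le
    have hc0 : 0 ≤ ∑ i ∈ Finset.Icc 1 N, x ^ i := dtv_csum_nonneg hx0 N
    rw [hr N k, Finset.sum_Icc_succ_top (by omega)]
    have h1 := ih k
    have h2 := dtv_geF hx0 hx2 hnn hr0 hr N k
    have h3 := mul_le_mul_of_nonneg_left h1 (by linarith : (0:ℝ) ≤ 1 - x ^ (N + 1))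
    have h4 := mul_le_mul_of_nonneg_left h2 hc0
    have h5 := hnn (N + 1) k
    nlinarith

include h0s in
lemma dtv_monok (N k : ℕ) : F N (k + 1) ≤ F N k := by
  have h := dtv_ratio hx0 hx2 h0s hnn hr0 hr N k
  have h2 := mul_le_mul_of_nonneg_right (dtv_csum_le_one hx0 hx2 N) (hnn N k)
  rw [one_mul] at h2
  linarith

include h0s in
lemma dtv_monoN (N k : ℕ) : F N (k + 1) ≤ F (N + 1) (k + 1) := by
  induction k with
  | zero =>
    rw [hr N 0, hr0 N]
    have h1 := dtv_ratio hx0 hx2 h0s hnn hr0 hr N 0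
    have h2 := dtv_csum_le hx0 hx2 N
    have hp0 : 0 ≤ x ^ (N + 1) := pow_nonneg hx0.le _
    have h3 := mul_le_mul_of_nonneg_right h2 (hnn N 0)
    have h4 := hnn N 0
    have h5 := hnn N 1
    nlinarith
  | succ k ih =>
    rw [hr N (k + 1)]
    have h1 := dtv_monok hx0 hx2 h0s hnn hr0 hr N (k + 1)
    have hp0 : 0 ≤ x ^ (N + 1) := pow_nonneg hx0.le _
    have hx1 : x < 1 := lt_of_le_of_lt hx2 (by norm_num)
    have hp1 : x ^ (N + 1) ≤ 1 := pow_le_one₀ hx0.le hx1.le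
    nlinarith

include h0s in
lemma dtv_monoN' (k N M : ℕ) (hNM : N ≤ M) : F N (k + 1) ≤ F M (k + 1) := by
  induction M, hNM using Nat.le_induction with
  | base => exact le_refl _
  | succ M hNM ih => exact le_trans ih (dtv_monoN hx0 hx2 h0s hnn hr0 hr M k)

include h00 in
lemma dtv_F0prod (N : ℕ) : F N 0 = ∏ i ∈ Finset.Icc 1 N, (1 - x ^ i) := by
  induction N with
  | zero => simpa using h00
  | succ N ih => rw [hr0 N, ih, Finset.prod_Icc_succ_top (by omega)]; ring

end
end DTVArith

section DTVLim
variable {Ω : Type*} [MeasurableSpace Ω] (P : Measure Ω) (Z : ℕ → Ω → ℕ)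
  [IsProbabilityMeasure P] (S : Ω → ℕ)

lemma dtv_tendsto (hmeas : ∀ i, Measurable (Z i)) (hSmeas : Measurable S)
    (hS : ∀ᵐ ω ∂P, ∀ᶠ N in atTop, S ω = ∑ i ∈ Finset.Icc 1 N, Z i ω) (k : ℕ) :
    Tendsto (fun N => dtvF P Z N k) atTop (𝓝 ((P {ω | S ω = k}).toReal)) := by
  classical
  set A : ℕ → Set Ω := fun N => {ω | ∀ M, N ≤ M → S ω = ∑ i ∈ Finset.Icc 1 M, Z i ω} with hA
  have hmeasSN : ∀ N, Measurable (fun ω => ∑ i ∈ Finset.Icc 1 N, Z i ω) :=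
    fun N => Finset.measurable_sum _ (fun i _ => hmeas i)
  have hAmeas : ∀ N, MeasurableSet (A N) := by
    intro N
    have : A N = ⋂ (M : ℕ), ⋂ (_ : N ≤ M), {ω | S ω = ∑ i ∈ Finset.Icc 1 M, Z i ω} := by
      ext ω; simp [hA]
    rw [this]
    exact MeasurableSet.iInter fun M => MeasurableSet.iInter fun _ =>
      measurableSet_eq_fun hSmeas (hmeasSN M)
  have hAmono : Monotone A := fun N M hNM ω hω M' hM' => hω M' (le_trans hNM hM')
  have hAunion : P (⋃ N, A N) = 1 := by
    have hae : ∀ᵐ ω ∂P, ω ∈ ⋃ N, A N := by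
      filter_upwards [hS] with ω hω
      obtain ⟨N, hN⟩ := eventually_atTop.1 hω
      exact Set.mem_iUnion.2 ⟨N, fun M hM => hN M hM⟩
    have h0 : P (⋃ N, A N)ᶜ = 0 := ae_iff.1 hae
    exact (prob_compl_eq_zero_iff (MeasurableSet.iUnion hAmeas)).1 h0
  have hAtend : Tendsto (fun N => P (A N)) atTop (𝓝 1) := by
    have h := tendsto_measure_iUnion_atTop (μ := P) hAmono
    rw [hAunion] at h
    exact h
  have hAc : Tendsto (fun N => (P (A N)ᶜ).toReal) atTop (𝓝 0) := by
    have h1 : Tendsto (fun N => (P (A N)).toReal) atTop (𝓝 1) := by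
      have := (ENNReal.tendsto_toReal (a := 1) (by simp)).comp hAtend
      exact this
    have h2 : ∀ N, (P (A N)ᶜ).toReal = 1 - (P (A N)).toReal := by
      intro N
      rw [measure_compl (hAmeas N) (measure_ne_top P _), measure_univ,
        ENNReal.toReal_sub_of_le prob_le_one (by simp)]
      simp
    simp_rw [h2]
    have := (tendsto_const_nhds (x := (1:ℝ)) (f := (atTop : Filter ℕ))).sub h1
    simpa using this
  have hbound : ∀ N, |dtvF P Z N k - (P {ω | S ω = k}).toReal| ≤ (P (A N)ᶜ).toReal := by
    intro N
    have hmeasset : MeasurableSet {ω | S ω = k} :=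
      hSmeas (({k} : Set ℕ).to_countable.measurableSet)
    have hmeasset2 : MeasurableSet {ω | ∑ i ∈ Finset.Icc 1 N, Z i ω = k} :=
      (hmeasSN N) (({k} : Set ℕ).to_countable.measurableSet)
    have hsub1 : {ω | ∑ i ∈ Finset.Icc 1 N, Z i ω = k} ⊆ {ω | S ω = k} ∪ (A N)ᶜ := by
      intro ω hω
      by_cases hA' : ω ∈ A N
      · left; have := hA' N le_rfl; simp only [Set.mem_setOf_eq] at hω ⊢; omega
      · right; exact hA'
    have hsub2 : {ω | S ω = k} ⊆ {ω | ∑ i ∈ Finset.Icc 1 N, Z i ω = k} ∪ (A N)ᶜ := by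
      intro ω hω
      by_cases hA' : ω ∈ A N
      · left; have := hA' N le_rfl; simp only [Set.mem_setOf_eq] at hω ⊢; omega
      · right; exact hA'
    have h1 : P {ω | ∑ i ∈ Finset.Icc 1 N, Z i ω = k} ≤ P {ω | S ω = k} + P (A N)ᶜ :=
      le_trans (measure_mono hsub1) (measure_union_le _ _)
    have h2 : P {ω | S ω = k} ≤ P {ω | ∑ i ∈ Finset.Icc 1 N, Z i ω = k} + P (A N)ᶜ :=
      le_trans (measure_mono hsub2) (measure_union_le _ _)
    have h1' : dtvF P Z N k ≤ (P {ω | S ω = k}).toReal + (P (A N)ᶜ).toReal := by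
      have := ENNReal.toReal_mono (by finiteness) h1
      rwa [ENNReal.toReal_add (by finiteness) (by finiteness)] at this
    have h2' : (P {ω | S ω = k}).toReal ≤ dtvF P Z N k + (P (A N)ᶜ).toReal := by
      have := ENNReal.toReal_mono (by finiteness) h2
      rwa [ENNReal.toReal_add (by finiteness) (by finiteness)] at this
    rw [abs_le]
    constructor <;> [linarith; linarith]
  have h0 : Tendsto (fun N => dtvF P Z N k - (P {ω | S ω = k}).toReal) atTop (𝓝 0) := by
    apply squeeze_zero_norm (fun N => ?_) hAc
    exact hbound N
  have := h0.add (tendsto_const_nhds (x := (P {ω | S ω = k}).toReal))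
  simpa using this

end DTVLim

section DTVProd
variable {x : ℝ}

lemma dtv_multipliable (hx0 : 0 < x) (hx2 : x ≤ 1 / 2) (n : ℕ) :
    Multipliable (fun i : ℕ => 1 - x ^ (n + 1 + i)) := by
  have hx1 : x < 1 := lt_of_le_of_lt hx2 (by norm_num)
  have hple : ∀ i : ℕ, x ^ (n + 1 + i) ≤ x := by
    intro i
    calc x ^ (n + 1 + i) ≤ x ^ 1 := pow_le_pow_of_le_one hx0.le hx1.le (by omega)
    _ = x := pow_one x
  have hpos : ∀ i : ℕ, 0 < 1 - x ^ (n + 1 + i) := fun i => by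
    have := hple i; linarith
  have hsummable : Summable (fun i : ℕ => Real.log (1 - x ^ (n + 1 + i))) := by
    have hg : Summable (fun i : ℕ => -Real.log (1 - x ^ (n + 1 + i))) := by
      apply Summable.of_nonneg_of_le (fun i => ?_) (fun i => ?_)
        (Summable.mul_left (2 * x ^ (n + 1))
          (summable_geometric_of_lt_one hx0.le hx1))
      · have h1 : 1 - x ^ (n + 1 + i) ≤ 1 := by
          have := pow_nonneg hx0.le (n + 1 + i); linarith
        have := Real.log_nonpos (by linarith [hpos i]) h1
        linarith
      · set u := x ^ (n + 1 + i) with hu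
        have hu0 : 0 < u := pow_pos hx0 _
        have hu2 : u ≤ 1 / 2 := le_trans (hple i) hx2
        have h1 : -Real.log (1 - u) = Real.log (1 - u)⁻¹ := (Real.log_inv _).symm
        have h2 : Real.log (1 - u)⁻¹ ≤ (1 - u)⁻¹ - 1 :=
          Real.log_le_sub_one_of_pos (inv_pos.2 (by linarith))
        have h3 : (1 - u)⁻¹ - 1 ≤ 2 * u := by
          rw [inv_eq_one_div, div_sub' (by linarith : (1:ℝ) - u ≠ 0)]
          rw [div_le_iff₀ (by linarith : (0:ℝ) < 1 - u)]
          nlinarith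
        have h4 : 2 * x ^ (n + 1) * x ^ i = 2 * u := by
          rw [hu, pow_add]; ring
        rw [h4]
        linarith
    have := hg.neg
    simpa using this
  exact Real.multipliable_of_summable_log hpos hsummable

lemma dtv_prod_split (n m : ℕ) :
    ∏ i ∈ Finset.Icc 1 (n + m), (1 - x ^ i)
      = (∏ i ∈ Finset.Icc 1 n, (1 - x ^ i)) * ∏ i ∈ Finset.range m, (1 - x ^ (n + 1 + i)) := by
  induction m with
  | zero => simp
  | succ m ih =>
    have e : n + (m + 1) = (n + m) + 1 := rfl
    rw [e, Finset.prod_Icc_succ_top (by omega), ih, Finset.prod_range_succ]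
    have e2 : n + 1 + m = n + m + 1 := by omega
    rw [e2]
    ring
end DTVProd
section DTVSet
variable {Ω : Type*} [MeasurableSpace Ω] (P : Measure Ω) [IsProbabilityMeasure P]

lemma dtv_decomp (f : Ω → ℕ) (hf : Measurable f) (B : Set ℕ) :
    P {ω | f ω ∈ B} = ∑' k : B, P {ω | f ω = (k : ℕ)} := by
  have h : {ω | f ω ∈ B} = ⋃ k ∈ B, f ⁻¹' {k} := by ext ω; simp
  rw [h, measure_biUnion B.to_countable ?_ (fun b _ => hf (dtv_measB _))]
  · rfl
  · intro a ha b hb hab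
    refine Set.disjoint_left.2 (fun ω h1 h2 => hab ?_)
    simp only [Set.mem_preimage, Set.mem_singleton_iff] at h1 h2
    rw [← h1, ← h2]

lemma dtv_compl (f : Ω → ℕ) (hf : Measurable f) (B : Set ℕ) :
    (P {ω | f ω ∈ Bᶜ}).toReal = 1 - (P {ω | f ω ∈ B}).toReal := by
  have h : {ω | f ω ∈ Bᶜ} = (f ⁻¹' B)ᶜ := rfl
  have h2 : {ω | f ω ∈ B} = f ⁻¹' B := rfl
  rw [h, h2, measure_compl (hf (dtv_measB B)) (measure_ne_top _ _), measure_univ,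
    ENNReal.toReal_sub_of_le prob_le_one (by simp), ENNReal.toReal_one]

lemma dtv_split (f : Ω → ℕ) (hf : Measurable f) (B : Set ℕ) (h0 : 0 ∈ B) :
    (P {ω | f ω ∈ B}).toReal = (P {ω | f ω = 0}).toReal + (P {ω | f ω ∈ B \ {0}}).toReal := by
  have h : {ω | f ω ∈ B} = {ω | f ω = 0} ∪ {ω | f ω ∈ B \ {0}} := by
    ext ω
    simp only [Set.mem_setOf_eq, Set.mem_union, Set.mem_diff, Set.mem_singleton_iff]
    constructor
    · intro hB
      by_cases hz : f ω = 0
      · exact Or.inl hz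
      · exact Or.inr ⟨hB, hz⟩
    · rintro (hz | ⟨hB, _⟩)
      · exact hz ▸ h0
      · exact hB
  rw [h, measure_union ?_
    (show MeasurableSet {ω | f ω ∈ B \ {0}} from hf (dtv_measB _))]
  · exact ENNReal.toReal_add (measure_ne_top _ _) (measure_ne_top _ _)
  · exact Set.disjoint_left.2 (fun ω h1 h2 => h2.2 h1)

end DTVSet

theorem dTV_S_Sn_exact {Ω : Type*} [MeasurableSpace Ω] (P : Measure Ω)
    [IsProbabilityMeasure P] (x : ℝ) (hx0 : 0 < x) (hx2 : x ≤ 1 / 2)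
    (Z : ℕ → Ω → ℕ) (hmeas : ∀ i, Measurable (Z i))
    (hindep : iIndepFun Z P)
    (hgeom : ∀ i, 1 ≤ i → ∀ k : ℕ, P {ω | k ≤ Z i ω} = ENNReal.ofReal (x ^ (i * k)))
    (S : Ω → ℕ) (hSmeas : Measurable S)
    (hS : ∀ᵐ ω ∂P, ∀ᶠ N in atTop, S ω = ∑ i ∈ Finset.Icc 1 N, Z i ω)
    (n : ℕ) (hn : 1 ≤ n) :
    (⨆ B : Set ℕ, |(P {ω | S ω ∈ B}).toReal
        - (P {ω | (∑ i ∈ Finset.Icc 1 n, Z i ω) ∈ B}).toReal|)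
      = (∏ i ∈ Finset.Icc 1 n, (1 - x ^ i)) * (1 - ∏' i : ℕ, (1 - x ^ (n + 1 + i)))
    ∧ (⨆ B : Set ℕ, |(P {ω | S ω ∈ B}).toReal
        - (P {ω | (∑ i ∈ Finset.Icc 1 n, Z i ω) ∈ B}).toReal|)
      = (P {ω | ∑ i ∈ Finset.Icc 1 n, Z i ω = 0}).toReal - (P {ω | S ω = 0}).toReal := by
  classical
  have hx1 : x < 1 := lt_of_le_of_lt hx2 (by norm_num)
  have hF00 : dtvF P Z 0 0 = 1 := by
    have h : {ω | ∑ i ∈ Finset.Icc 1 0, Z i ω = 0} = Set.univ := by ext ω; simp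
    rw [dtvF, h, measure_univ, ENNReal.toReal_one]
  have hF0s : ∀ k, dtvF P Z 0 (k + 1) = 0 := by
    intro k
    have h : {ω | ∑ i ∈ Finset.Icc 1 0, Z i ω = k + 1} = ∅ := by ext ω; simp
    rw [dtvF, h, measure_empty, ENNReal.toReal_zero]
  have hFnn : ∀ N k, 0 ≤ dtvF P Z N k := fun N k => ENNReal.toReal_nonneg
  have hr0 := dtv_rec0 P Z hx0 hx1 hgeom hmeas hindep
  have hr := dtv_rec P Z hx0 hx1 hgeom hmeas hindep
  have hmonoN' := dtv_monoN' hx0 hx2 hF0s hFnn hr0 hr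
  have hF0prod := dtv_F0prod hx0 hx2 hF00 hFnn hr0 hr
  have hlim := dtv_tendsto P Z S hmeas hSmeas hS
  have hcmp : ∀ k : ℕ, dtvF P Z n (k + 1) ≤ (P {ω | S ω = k + 1}).toReal := fun k =>
    ge_of_tendsto (hlim (k + 1)) (eventually_atTop.2 ⟨n, fun M hM => hmonoN' k n M hM⟩)
  have hmult := dtv_multipliable hx0 hx2 n
  set t := ∏' i : ℕ, (1 - x ^ (n + 1 + i)) with ht
  have htend_t : Tendsto (fun m => ∏ i ∈ Finset.range m, (1 - x ^ (n + 1 + i)))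
      atTop (𝓝 t) := hmult.hasProd.tendsto_prod_nat
  have hfacnn : ∀ i : ℕ, (0:ℝ) ≤ 1 - x ^ (n + 1 + i) := by
    intro i
    have h1 : x ^ (n + 1 + i) ≤ x ^ 1 := pow_le_pow_of_le_one hx0.le hx1.le (by omega)
    rw [pow_one] at h1
    linarith
  have hfacle : ∀ i : ℕ, (1:ℝ) - x ^ (n + 1 + i) ≤ 1 := by
    intro i
    have := pow_nonneg hx0.le (n + 1 + i)
    linarith
  have ht_le1 : t ≤ 1 :=
    le_of_tendsto' htend_t (fun m =>
      Finset.prod_le_one (fun i _ => hfacnn i) (fun i _ => hfacle i))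
  have ht_nn : 0 ≤ t :=
    ge_of_tendsto' htend_t (fun m => Finset.prod_nonneg (fun i _ => hfacnn i))
  have hnu0 : (P {ω | S ω = 0}).toReal = (∏ i ∈ Finset.Icc 1 n, (1 - x ^ i)) * t := by
    have h1 : Tendsto (fun m : ℕ => dtvF P Z (m + n) 0) atTop
        (𝓝 ((P {ω | S ω = 0}).toReal)) := (hlim 0).comp (tendsto_add_atTop_nat n)
    have h2 : (fun m : ℕ => dtvF P Z (m + n) 0)
        = fun m => (∏ i ∈ Finset.Icc 1 n, (1 - x ^ i))
            * ∏ i ∈ Finset.range m, (1 - x ^ (n + 1 + i)) := by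
      funext m
      rw [hF0prod (m + n), show m + n = n + m from Nat.add_comm m n, dtv_prod_split]
    rw [h2] at h1
    exact tendsto_nhds_unique h1 (htend_t.const_mul _)
  have hmu0eq : dtvF P Z n 0 = ∏ i ∈ Finset.Icc 1 n, (1 - x ^ i) := hF0prod n
  have hprod_nn : 0 ≤ ∏ i ∈ Finset.Icc 1 n, (1 - x ^ i) := by
    refine Finset.prod_nonneg (fun i hi => ?_)
    have h1 : x ^ i ≤ x ^ 1 :=
      pow_le_pow_of_le_one hx0.le hx1.le (Finset.mem_Icc.1 hi).1
    rw [pow_one] at h1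
    linarith
  have hnu0_le : (P {ω | S ω = 0}).toReal ≤ dtvF P Z n 0 := by
    rw [hnu0, hmu0eq]
    nlinarith
  set D := dtvF P Z n 0 - (P {ω | S ω = 0}).toReal with hD
  have hDnn : 0 ≤ D := by rw [hD]; linarith
  have hsingle : ∀ k : ℕ, k ≠ 0 →
      P {ω | ∑ i ∈ Finset.Icc 1 n, Z i ω = k} ≤ P {ω | S ω = k} := by
    intro k hk
    obtain ⟨k', rfl⟩ := Nat.exists_eq_succ_of_ne_zero hk
    exact (ENNReal.toReal_le_toReal (measure_ne_top _ _) (measure_ne_top _ _)).1 (hcmp k')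
  have hmeasSn : Measurable (fun ω => ∑ i ∈ Finset.Icc 1 n, Z i ω) := dtv_measS Z hmeas n
  have hkey : ∀ B : Set ℕ, 0 ∉ B →
      P {ω | (∑ i ∈ Finset.Icc 1 n, Z i ω) ∈ B} ≤ P {ω | S ω ∈ B} := by
    intro B hB
    rw [dtv_decomp P _ hmeasSn B, dtv_decomp P S hSmeas B]
    exact ENNReal.tsum_le_tsum (fun k => hsingle k (fun h => hB (h ▸ k.2)))
  have hkeyR : ∀ B : Set ℕ, 0 ∉ B →
      (P {ω | (∑ i ∈ Finset.Icc 1 n, Z i ω) ∈ B}).toReal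
        ≤ (P {ω | S ω ∈ B}).toReal := fun B hB =>
    ENNReal.toReal_mono (measure_ne_top _ _) (hkey B hB)
  have hdtv_rfl : dtvF P Z n 0 = (P {ω | ∑ i ∈ Finset.Icc 1 n, Z i ω = 0}).toReal := rfl
  have hmain : ∀ B : Set ℕ,
      (P {ω | (∑ i ∈ Finset.Icc 1 n, Z i ω) ∈ B}).toReal
        - (P {ω | S ω ∈ B}).toReal ≤ D := by
    intro B
    by_cases h0 : 0 ∈ B
    · have h1 := dtv_split P _ hmeasSn B h0
      have h2 := dtv_split P S hSmeas B h0
      have h3 := hkeyR (B \ {0}) (by simp)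
      rw [h1, h2, hD]
      linarith [hdtv_rfl]
    · have h3 := hkeyR B h0
      linarith
  have habs : ∀ B : Set ℕ,
      |(P {ω | S ω ∈ B}).toReal
        - (P {ω | (∑ i ∈ Finset.Icc 1 n, Z i ω) ∈ B}).toReal| ≤ D := by
    intro B
    rw [abs_le]
    refine ⟨by linarith [hmain B], ?_⟩
    have h := hmain Bᶜ
    rw [dtv_compl P _ hmeasSn B, dtv_compl P S hSmeas B] at h
    linarith
  have hbdd : BddAbove (Set.range fun B : Set ℕ =>
      |(P {ω | S ω ∈ B}).toReal
        - (P {ω | (∑ i ∈ Finset.Icc 1 n, Z i ω) ∈ B}).toReal|) :=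
    ⟨D, by rintro y ⟨B, rfl⟩; exact habs B⟩
  have hval : |(P {ω | S ω ∈ ({0} : Set ℕ)}).toReal
      - (P {ω | (∑ i ∈ Finset.Icc 1 n, Z i ω) ∈ ({0} : Set ℕ)}).toReal| = D := by
    have e1 : {ω | S ω ∈ ({0} : Set ℕ)} = {ω | S ω = 0} := rfl
    have e2 : {ω | (∑ i ∈ Finset.Icc 1 n, Z i ω) ∈ ({0} : Set ℕ)}
        = {ω | ∑ i ∈ Finset.Icc 1 n, Z i ω = 0} := rfl
    rw [e1, e2, hD]
    rw [abs_of_nonpos (by linarith [hdtv_rfl])]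
    linarith [hdtv_rfl]
  have hsup : (⨆ B : Set ℕ, |(P {ω | S ω ∈ B}).toReal
      - (P {ω | (∑ i ∈ Finset.Icc 1 n, Z i ω) ∈ B}).toReal|) = D := by
    refine le_antisymm (ciSup_le habs) ?_
    calc D = |(P {ω | S ω ∈ ({0} : Set ℕ)}).toReal
        - (P {ω | (∑ i ∈ Finset.Icc 1 n, Z i ω) ∈ ({0} : Set ℕ)}).toReal| := hval.symm
      _ ≤ _ := le_ciSup hbdd ({0} : Set ℕ)
  refine ⟨?_, ?_⟩
  · rw [hsup, hD, hmu0eq, hnu0]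
    ring
  · rw [hsup, hD, hdtv_rfl]
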